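/- arXiv:1509.06591 — 2 statements merged into one kernel-verified Lean document; each statement's English description precedes it below -/
import Mathlib

section
/- If a bipartite density matrix σ_{AB} on H_A ⊗ H_B (dim H_B = d_B) satisfies (d_B + 1) σ_{AB} ≥ σ_A ⊗ I_B (in the positive-semidefinite ordering), then σ_{AB} is separable. -/
open Matrix Kronecker BigOperators
open scoped ComplexOrder

/-- Partial trace over the second (B) tensor factor. -/
noncomputable def ptraceB {A B : Type*} [Fintype B]
    (M : Matrix (A × B) (A × B) ℂ) : Matrix A A ℂ :=
  Matrix.of fun a a' => ∑ b, M (a, b) (a', b)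

/-- The marginal of a state on `A × (B₁ × ⋯ × B_k)` on the subsystems `A, B_i`. -/
noncomputable def margAB {A B : Type*} {k : ℕ} [Fintype B] [DecidableEq B] (i : Fin k)
    (ρ : Matrix (A × (Fin k → B)) (A × (Fin k → B)) ℂ) : Matrix (A × B) (A × B) ℂ :=
  Matrix.of fun p q => ∑ f : Fin k → B,
    if f i = p.2 then ρ (p.1, f) (q.1, Function.update f i q.2) else 0

/-- A density matrix: positive semidefinite with unit trace. -/
def IsDensity {n : Type*} [Fintype n] (ρ : Matrix n n ℂ) : Prop :=
  ρ.PosSemidef ∧ ρ.trace = 1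

/-- A bipartite state is separable if it is a finite convex combination of
product density matrices. -/
def IsSep {A B : Type*} [Fintype A] [Fintype B]
    (ρ : Matrix (A × B) (A × B) ℂ) : Prop :=
  ∃ (n : ℕ) (p : Fin n → ℝ) (σA : Fin n → Matrix A A ℂ) (σB : Fin n → Matrix B B ℂ),
    (∀ i, 0 ≤ p i) ∧ (∑ i, p i = 1) ∧ (∀ i, IsDensity (σA i)) ∧ (∀ i, IsDensity (σB i)) ∧
    ρ = ∑ i, (p i : ℂ) • (σA i ⊗ₖ σB i)

/-- `ρAB` has a `k`-symmetric extension. -/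
def HasSymExt {A B : Type*} [Fintype A] [Fintype B] [DecidableEq B] (k : ℕ)
    (ρAB : Matrix (A × B) (A × B) ℂ) : Prop :=
  ∃ ρ : Matrix (A × (Fin k → B)) (A × (Fin k → B)) ℂ,
    IsDensity ρ ∧ ∀ i : Fin k, margAB i ρ = ρAB

/-- The permutation operator `W_π` on `(ℂ^B)^{⊗ k}`,
`W_π |i_1 … i_k⟩ = |i_{π⁻¹(1)} … i_{π⁻¹(k)}⟩`. -/
noncomputable def Wperm {k : ℕ} {B : Type*} [DecidableEq B] (π : Equiv.Perm (Fin k)) :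
    Matrix (Fin k → B) (Fin k → B) ℂ :=
  Matrix.of fun f g => if f = g ∘ ⇑π⁻¹ then 1 else 0

/-- `(1/k!) ∑_π W_π`. -/
noncomputable def symProj {k : ℕ} {B : Type*} [DecidableEq B] :
    Matrix (Fin k → B) (Fin k → B) ℂ :=
  ((k.factorial : ℂ))⁻¹ • ∑ π : Equiv.Perm (Fin k), Wperm π

/-- `ρAB` has a `k`-bosonic extension: a `k`-symmetric extension whose support on the
`B` systems lies in the symmetric subspace. -/
def HasBosonicExt {A B : Type*} [Fintype A] [DecidableEq A] [Fintype B] [DecidableEq B] (k : ℕ)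
    (ρAB : Matrix (A × B) (A × B) ℂ) : Prop :=
  ∃ ρ : Matrix (A × (Fin k → B)) (A × (Fin k → B)) ℂ,
    IsDensity ρ ∧ (∀ i : Fin k, margAB i ρ = ρAB) ∧
    ((1 : Matrix A A ℂ) ⊗ₖ symProj) * ρ * ((1 : Matrix A A ℂ) ⊗ₖ symProj) = ρ

open scoped ComplexOrder

noncomputable def rankOne {α : Type*} (x : α → ℂ) : Matrix α α ℂ :=
  Matrix.of fun p q => x p * (starRingEnd ℂ) (x q)

lemma rankOne_posSemidef {α : Type*} [Fintype α] (x : α → ℂ) : (rankOne x).PosSemidef := by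
  refine Matrix.PosSemidef.of_dotProduct_mulVec_nonneg ?_ ?_
  · ext p q
    simp [rankOne, Matrix.conjTranspose_apply, mul_comm]
  · intro v
    have : (star v) ⬝ᵥ (rankOne x *ᵥ v) = (∑ p, (starRingEnd ℂ) (v p) * x p) *
        (∑ q, (starRingEnd ℂ) (x q) * v q) := by
      rw [Finset.sum_mul_sum]
      simp [dotProduct, Matrix.mulVec, rankOne, Finset.mul_sum]
      congr 1; ext p; congr 1; ext q; ring
    rw [this]
    have h2 : (∑ q, (starRingEnd ℂ) (x q) * v q) = (starRingEnd ℂ) (∑ p, (starRingEnd ℂ) (v p) * x p) := by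
      rw [map_sum]; congr 1; ext p; simp [mul_comm]
    rw [h2, mul_comm]
    exact star_mul_self_nonneg _

lemma rankOne_kron {A B : Type*} (x : A → ℂ) (y : B → ℂ) :
    rankOne x ⊗ₖ rankOne y = rankOne (fun p : A × B => x p.1 * y p.2) := by
  ext ⟨a, b⟩ ⟨a', b'⟩
  simp [rankOne, Matrix.kroneckerMap_apply]
  ring

lemma trace_rankOne {α : Type*} [Fintype α] (x : α → ℂ) :
    (rankOne x).trace = ((∑ p, Complex.normSq (x p) : ℝ) : ℂ) := by
  simp [Matrix.trace, Matrix.diag, rankOne, Complex.mul_conj]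

open scoped MatrixOrder in
lemma psd_sum_rankOne {n : Type*} [Fintype n] [DecidableEq n] {M : Matrix n n ℂ}
    (h : M.PosSemidef) : ∃ V : n → n → ℂ, M = ∑ i, rankOne (V i) := by
  obtain ⟨C, rfl⟩ := CStarAlgebra.nonneg_iff_eq_star_mul_self.mp h.nonneg
  refine ⟨fun i t => (starRingEnd ℂ) (C i t), ?_⟩
  ext p q
  simp [Matrix.mul_apply, rankOne, Matrix.star_eq_conjTranspose, Matrix.conjTranspose_apply, Matrix.sum_apply, mul_comm]

noncomputable def chi : Fin 4 → ℂ := ![1, Complex.I, -1, -Complex.I]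

lemma site_sum {B : Type*} [DecidableEq B] (b b' c c' r : B) :
    ∑ k : Fin 4, ((if r = b then chi k else 1) * (if r = b' then (starRingEnd ℂ) (chi k) else 1) *
      (if r = c then (starRingEnd ℂ) (chi k) else 1) * (if r = c' then chi k else 1))
    = if ((r = b ↔ r = b') ∧ (r = c ↔ r = c')) ∨ ((r = b ↔ r = c) ∧ (r = b' ↔ r = c')) then 4 else 0 := by
  rcases eq_or_ne r b with rfl | h1 <;>
  rcases eq_or_ne r b' with rfl | h2 <;>
  rcases eq_or_ne r c with rfl | h3 <;>
  rcases eq_or_ne r c' with rfl | h4 <;>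
  simp_all [Fin.sum_univ_four, chi, Complex.ext_iff] <;> first | norm_num | tauto

lemma forall_site_iff {B : Type*} (b b' c c' : B) :
    (∀ r : B, ((r = b ↔ r = b') ∧ (r = c ↔ r = c')) ∨ ((r = b ↔ r = c) ∧ (r = b' ↔ r = c')))
      ↔ ((b = b' ∧ c = c') ∨ (b = c ∧ b' = c')) := by
  constructor
  · intro h
    by_cases hbb : b = b'
    · left
      refine ⟨hbb, ?_⟩
      rcases h c with ⟨h1, h2⟩ | ⟨h1, h2⟩
      · exact h2.mp rfl
      · exact h2.mp ((h1.mpr rfl).trans hbb)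
    · right
      rcases h b with ⟨h1, h2⟩ | ⟨h1, h2⟩
      · exact absurd (h1.mp rfl) hbb
      · refine ⟨h1.mp rfl, ?_⟩
        rcases h b' with ⟨g1, g2⟩ | ⟨g1, g2⟩
        · exact absurd (g1.mpr rfl).symm hbb
        · exact g2.mp rfl
  · rintro (⟨rfl, rfl⟩ | ⟨rfl, rfl⟩) r
    · exact Or.inl ⟨Iff.rfl, Iff.rfl⟩
    · exact Or.inr ⟨Iff.rfl, Iff.rfl⟩

lemma keyScalar {B : Type*} [Fintype B] [DecidableEq B] (b b' c c' : B) :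
    ∑ ω : B → Fin 4, chi (ω b) * (starRingEnd ℂ) (chi (ω b')) * (starRingEnd ℂ) (chi (ω c)) * chi (ω c')
    = if (b = b' ∧ c = c') ∨ (b = c ∧ b' = c') then (4 : ℂ) ^ (Fintype.card B) else 0 := by
  have step1 : ∀ ω : B → Fin 4,
      chi (ω b) * (starRingEnd ℂ) (chi (ω b')) * (starRingEnd ℂ) (chi (ω c)) * chi (ω c')
      = ∏ r : B, ((if r = b then chi (ω r) else 1) * (if r = b' then (starRingEnd ℂ) (chi (ω r)) else 1) *
          (if r = c then (starRingEnd ℂ) (chi (ω r)) else 1) * (if r = c' then chi (ω r) else 1)) := by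
    intro ω
    rw [Finset.prod_mul_distrib, Finset.prod_mul_distrib, Finset.prod_mul_distrib]
    congr 1
    · congr 1
      · congr 1
        · rw [Finset.prod_ite_eq' Finset.univ b (fun r => chi (ω r))]; simp
        · rw [Finset.prod_ite_eq' Finset.univ b' (fun r => (starRingEnd ℂ) (chi (ω r)))]; simp
      · rw [Finset.prod_ite_eq' Finset.univ c (fun r => (starRingEnd ℂ) (chi (ω r)))]; simp
    · rw [Finset.prod_ite_eq' Finset.univ c' (fun r => chi (ω r))]; simp
  simp_rw [step1]
  rw [← Fintype.prod_sum (ι := B) (κ := fun _ => Fin 4) (R := ℂ)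
    (f := fun r k => ((if r = b then chi k else 1) * (if r = b' then (starRingEnd ℂ) (chi k) else 1) *
      (if r = c then (starRingEnd ℂ) (chi k) else 1) * (if r = c' then chi k else 1)))]
  have step2 : ∀ r : B, (∑ k : Fin 4, ((if r = b then chi k else 1) * (if r = b' then (starRingEnd ℂ) (chi k) else 1) *
      (if r = c then (starRingEnd ℂ) (chi k) else 1) * (if r = c' then chi k else 1)))
      = if ((r = b ↔ r = b') ∧ (r = c ↔ r = c')) ∨ ((r = b ↔ r = c) ∧ (r = b' ↔ r = c')) then 4 else 0 :=
    fun r => site_sum b b' c c' r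
  simp_rw [step2]
  by_cases H : ∀ r : B, ((r = b ↔ r = b') ∧ (r = c ↔ r = c')) ∨ ((r = b ↔ r = c) ∧ (r = b' ↔ r = c'))
  · rw [if_pos ((forall_site_iff b b' c c').mp H)]
    rw [Finset.prod_congr rfl (fun r _ => if_pos (H r)), Finset.prod_const]
    simp
  · rw [if_neg (fun hd => H ((forall_site_iff b b' c c').mpr hd))]
    rw [not_forall] at H
    obtain ⟨r, hr⟩ := H
    exact Finset.prod_eq_zero (Finset.mem_univ r) (if_neg hr)

lemma scalar_core {B : Type*} [Fintype B] [DecidableEq B] (f : B → B → ℂ) (c c' : B) :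
    (∑ b, ∑ b', f b b' * (if (b = b' ∧ c = c') ∨ (b = c ∧ b' = c') then (1:ℂ) else 0))
      + (if c = c' then f c c' else 0)
    = (if c = c' then ∑ b, f b b else 0) + f c c' := by
  by_cases hcc : c = c'
  · subst hcc
    simp only [if_pos rfl, and_true]
    have key : ∀ b b' : B, (if b = b' ∨ (b = c ∧ b' = c) then (1:ℂ) else 0)
        = (if b = b' then 1 else 0) + (if b = c ∧ b' = c then 1 else 0)
          - (if b = b' ∧ b = c ∧ b' = c then 1 else 0) := by
      intro b b'
      by_cases hb : b = b' <;> by_cases hc : b = c ∧ b' = c <;> simp [hb, hc] <;> norm_num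
    simp_rw [key, mul_sub, mul_add, Finset.sum_sub_distrib, Finset.sum_add_distrib]
    have h1 : (∑ b, ∑ b', f b b' * (if b = b' then (1:ℂ) else 0)) = ∑ b, f b b := by
      simp [mul_ite, mul_one, mul_zero, Finset.sum_ite_eq]
    have h2 : (∑ b, ∑ b', f b b' * (if b = c ∧ b' = c then (1:ℂ) else 0)) = f c c := by
      simp [ite_and, mul_ite, mul_one, mul_zero, Finset.sum_ite_eq, Finset.sum_ite_eq']
    have h3 : (∑ b, ∑ b', f b b' * (if b = b' ∧ b = c ∧ b' = c then (1:ℂ) else 0)) = f c c := by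
      have : ∀ b b' : B, (b = b' ∧ b = c ∧ b' = c) ↔ (b = c ∧ b' = c) := by
        intro b b'; constructor
        · rintro ⟨_, h2, h3⟩; exact ⟨h2, h3⟩
        · rintro ⟨rfl, rfl⟩; exact ⟨rfl, rfl, rfl⟩
      simp_rw [this]
      simp [ite_and, mul_ite, mul_one, mul_zero, Finset.sum_ite_eq, Finset.sum_ite_eq']
    rw [h1, h2, h3]
    simp [add_comm]
  · have hiff : ∀ b b' : B, ((b = b' ∧ c = c') ∨ (b = c ∧ b' = c')) ↔ (b = c ∧ b' = c') := by
      intro b b'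
      constructor
      · rintro (⟨_, h⟩ | h)
        · exact absurd h hcc
        · exact h
      · exact Or.inr
    simp_rw [hiff]
    rw [if_neg hcc, if_neg hcc]
    have h2 : (∑ b, ∑ b', f b b' * (if b = c ∧ b' = c' then (1:ℂ) else 0)) = f c c' := by
      simp [ite_and, mul_ite, mul_one, mul_zero, Finset.sum_ite_eq, Finset.sum_ite_eq']
    rw [h2]; ring

noncomputable def xv {A B : Type*} [Fintype B] (v : A × B → ℂ) (w : B → ℂ) : A → ℂ :=
  fun a => ∑ b, v (a, b) * w b

lemma magic {A B : Type*} [Fintype A] [Fintype B] [DecidableEq B] (v : A × B → ℂ) :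
    ptraceB (rankOne v) ⊗ₖ (1 : Matrix B B ℂ) + rankOne v
    = (((4:ℂ) ^ Fintype.card B)⁻¹) • (∑ ω : B → Fin 4,
        rankOne (xv v (fun b => chi (ω b))) ⊗ₖ rankOne (fun b => (starRingEnd ℂ) (chi (ω b))))
      + ∑ j : B, rankOne (xv v (fun b => if b = j then 1 else 0))
          ⊗ₖ rankOne (fun b => if b = j then (1:ℂ) else 0) := by
  ext ⟨a, c⟩ ⟨a', c'⟩
  simp only [Matrix.add_apply, Matrix.smul_apply, Matrix.sum_apply, Matrix.kroneckerMap_apply,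
    rankOne, ptraceB, Matrix.of_apply, Matrix.one_apply, smul_eq_mul]
  -- second (e_j) sum
  have e1 : (∑ j : B, (xv v (fun b => if b = j then (1:ℂ) else 0) a *
        (starRingEnd ℂ) (xv v (fun b => if b = j then (1:ℂ) else 0) a')) *
        ((if c = j then (1:ℂ) else 0) * (starRingEnd ℂ) (if c' = j then (1:ℂ) else 0)))
      = if c = c' then v (a, c) * (starRingEnd ℂ) (v (a', c')) else 0 := by
    have hxe : ∀ (j : B) (t : A), xv v (fun b => if b = j then (1:ℂ) else 0) t = v (t, j) := by
      intro j t
      simp [xv, mul_ite, mul_one, mul_zero, Finset.sum_ite_eq']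
    simp only [hxe]
    have : ∀ j : B, (starRingEnd ℂ) (if c' = j then (1:ℂ) else 0) = if c' = j then (1:ℂ) else 0 := by
      intro j; split_ifs <;> simp
    simp only [this]
    by_cases hcc : c = c'
    · subst hcc
      rw [Finset.sum_eq_single c]
      · simp
      · intro j _ hj
        rw [if_neg (fun hc => hj hc.symm)]
        ring
      · intro hc; exact absurd (Finset.mem_univ c) hc
    · rw [if_neg hcc]
      apply Finset.sum_eq_zero
      intro j _
      by_cases h1 : c = j <;> by_cases h2 : c' = j
      · exact absurd (h1.trans h2.symm) hcc
      all_goals simp [h1, h2]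
  rw [e1]
  -- first (omega) sum
  have hx : ∀ (ω : B → Fin 4), (xv v (fun b => chi (ω b)) a *
        (starRingEnd ℂ) (xv v (fun b => chi (ω b)) a')) *
        (((starRingEnd ℂ) (chi (ω c))) * (starRingEnd ℂ) ((starRingEnd ℂ) (chi (ω c')))) 
      = ∑ b, ∑ b', (v (a, b) * (starRingEnd ℂ) (v (a', b'))) *
          (chi (ω b) * (starRingEnd ℂ) (chi (ω b')) * (starRingEnd ℂ) (chi (ω c)) * chi (ω c')) := by
    intro ω
    unfold xv
    rw [map_sum, Finset.sum_mul_sum, Finset.sum_mul]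
    apply Finset.sum_congr rfl
    intro b _
    rw [Finset.sum_mul]
    apply Finset.sum_congr rfl
    intro b' _
    simp only [_root_.map_mul, Complex.conj_conj]
    ring
  rw [Finset.sum_congr rfl (fun ω _ => hx ω)]
  rw [Finset.sum_comm]
  have swap2 : ∀ b : B, (∑ ω : B → Fin 4, ∑ b', (v (a, b) * (starRingEnd ℂ) (v (a', b'))) *
      (chi (ω b) * (starRingEnd ℂ) (chi (ω b')) * (starRingEnd ℂ) (chi (ω c)) * chi (ω c')))
      = ∑ b', (v (a, b) * (starRingEnd ℂ) (v (a', b'))) *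
          (if (b = b' ∧ c = c') ∨ (b = c ∧ b' = c') then (4:ℂ) ^ Fintype.card B else 0) := by
    intro b
    rw [Finset.sum_comm]
    apply Finset.sum_congr rfl
    intro b' _
    rw [← Finset.mul_sum, keyScalar]
  rw [Finset.sum_congr rfl (fun b _ => swap2 b)]
  have hpow : ((4:ℂ) ^ Fintype.card B) ≠ 0 := pow_ne_zero _ (by norm_num)
  have pull : ((4:ℂ) ^ Fintype.card B)⁻¹ * (∑ b, ∑ b', (v (a, b) * (starRingEnd ℂ) (v (a', b'))) *
      (if (b = b' ∧ c = c') ∨ (b = c ∧ b' = c') then (4:ℂ) ^ Fintype.card B else 0))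
      = ∑ b, ∑ b', (v (a, b) * (starRingEnd ℂ) (v (a', b'))) *
          (if (b = b' ∧ c = c') ∨ (b = c ∧ b' = c') then (1:ℂ) else 0) := by
    rw [Finset.mul_sum]
    apply Finset.sum_congr rfl
    intro b _
    rw [Finset.mul_sum]
    apply Finset.sum_congr rfl
    intro b' _
    split_ifs with hD
    · field_simp
    · simp
  rw [pull]
  have hcore := scalar_core (fun b b' => v (a, b) * (starRingEnd ℂ) (v (a', b'))) c c'
  rw [← add_sub_cancel_right (∑ b, ∑ b', (v (a, b) * (starRingEnd ℂ) (v (a', b'))) *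
      (if (b = b' ∧ c = c') ∨ (b = c ∧ b' = c') then (1:ℂ) else 0))
      (if c = c' then v (a, c) * (starRingEnd ℂ) (v (a', c')) else 0)]
  rw [hcore]
  simp [mul_ite, add_comm]

lemma psd_real_smul {n : Type*} [Fintype n] {M : Matrix n n ℂ} (hM : M.PosSemidef)
    {r : ℝ} (hr : 0 ≤ r) : (((r : ℂ)) • M).PosSemidef := by
  refine Matrix.PosSemidef.of_dotProduct_mulVec_nonneg ?_ ?_
  · show ((r : ℂ) • M)ᴴ = (r : ℂ) • M
    rw [Matrix.conjTranspose_smul, hM.1, Complex.star_def, Complex.conj_ofReal]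
  · intro v
    have : star v ⬝ᵥ ((r : ℂ) • M) *ᵥ v = (r : ℂ) * (star v ⬝ᵥ M *ᵥ v) := by
      simp [Matrix.smul_mulVec, dotProduct_smul]
    rw [this]
    exact mul_nonneg (by exact_mod_cast hr) (hM.dotProduct_mulVec_nonneg v)

lemma normSq_sum_eq_zero {n : Type*} [Fintype n] {x : n → ℂ}
    (h : ∑ t, Complex.normSq (x t) = 0) : x = 0 := by
  funext t
  have := (Finset.sum_eq_zero_iff_of_nonneg (fun i _ => Complex.normSq_nonneg (x i))).mp h t
    (Finset.mem_univ t)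
  exact Complex.normSq_eq_zero.mp this

lemma rankOne_zero {n : Type*} : rankOne (0 : n → ℂ) = 0 := by
  ext p q; simp [rankOne]

lemma unit_density {n : Type*} [Fintype n] [DecidableEq n] (a0 : n) :
    IsDensity (rankOne (fun t : n => if t = a0 then (1:ℂ) else 0)) := by
  refine ⟨rankOne_posSemidef _, ?_⟩
  rw [trace_rankOne]
  have : ∑ i : n, Complex.normSq (if i = a0 then (1:ℂ) else 0) = 1 := by
    simp [apply_ite Complex.normSq, Finset.sum_ite_eq']
  rw [this]
  norm_num

lemma norm_density {n : Type*} [Fintype n] {x : n → ℂ}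
    (hx : ∑ t, Complex.normSq (x t) ≠ 0) :
    IsDensity ((((∑ t, Complex.normSq (x t) : ℝ) : ℂ))⁻¹ • rankOne x) := by
  have hnn : 0 ≤ ∑ t, Complex.normSq (x t) :=
    Finset.sum_nonneg fun i _ => Complex.normSq_nonneg _
  constructor
  · rw [show (((∑ t, Complex.normSq (x t) : ℝ) : ℂ))⁻¹ = (((∑ t, Complex.normSq (x t) : ℝ)⁻¹ : ℝ) : ℂ) by push_cast; ring]
    exact psd_real_smul (rankOne_posSemidef x) (inv_nonneg.mpr hnn)
  · rw [Matrix.trace_smul, trace_rankOne, smul_eq_mul]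
    exact inv_mul_cancel₀ (Complex.ofReal_ne_zero.mpr hx)

lemma isSep_of_decomp {A B : Type*} [Fintype A] [DecidableEq A] [Fintype B] [DecidableEq B]
    [Nonempty A] [Nonempty B]
    {σ : Matrix (A × B) (A × B) ℂ} (htr : σ.trace = 1) {ι : Type*} [Fintype ι]
    (c : ι → ℝ) (hc : ∀ i, 0 ≤ c i) (x : ι → A → ℂ) (y : ι → B → ℂ)
    (hdec : σ = ∑ i, ((c i : ℝ) : ℂ) • (rankOne (x i) ⊗ₖ rankOne (y i))) : IsSep σ := by
  classical
  set n := Fintype.card ι with hn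
  set e : Fin n ≃ ι := (Fintype.equivFin ι).symm with he
  set nx : ι → ℝ := fun i => ∑ a, Complex.normSq (x i a) with hnx
  set ny : ι → ℝ := fun i => ∑ b, Complex.normSq (y i b) with hny
  have hnxnn : ∀ i, 0 ≤ nx i := fun i => Finset.sum_nonneg fun a _ => Complex.normSq_nonneg _
  have hnynn : ∀ i, 0 ≤ ny i := fun i => Finset.sum_nonneg fun a _ => Complex.normSq_nonneg _
  set a0 : A := Classical.arbitrary A
  set b0 : B := Classical.arbitrary B
  set DA : ι → Matrix A A ℂ := fun i =>
    if nx i = 0 then rankOne (fun t : A => if t = a0 then (1:ℂ) else 0)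
    else (((nx i : ℝ) : ℂ))⁻¹ • rankOne (x i) with hDA
  set DB : ι → Matrix B B ℂ := fun i =>
    if ny i = 0 then rankOne (fun t : B => if t = b0 then (1:ℂ) else 0)
    else (((ny i : ℝ) : ℂ))⁻¹ • rankOne (y i) with hDB
  have hDAd : ∀ i, IsDensity (DA i) := by
    intro i; rw [hDA]; dsimp only
    split_ifs with h
    · exact unit_density a0
    · exact norm_density h
  have hDBd : ∀ i, IsDensity (DB i) := by
    intro i; rw [hDB]; dsimp only
    split_ifs with h
    · exact unit_density b0
    · exact norm_density h
  have key : ∀ i : ι, ((c i : ℝ) : ℂ) • (rankOne (x i) ⊗ₖ rankOne (y i))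
      = (((c i * (nx i * ny i) : ℝ)) : ℂ) • (DA i ⊗ₖ DB i) := by
    intro i
    by_cases hx0 : nx i = 0
    · have : x i = 0 := normSq_sum_eq_zero hx0
      rw [this, rankOne_zero, hx0]
      simp [Matrix.zero_kronecker]
    · by_cases hy0 : ny i = 0
      · have : y i = 0 := normSq_sum_eq_zero hy0
        rw [this, rankOne_zero, hy0]
        simp [Matrix.kronecker_zero]
      · rw [hDA, hDB]; dsimp only
        rw [if_neg hx0, if_neg hy0]
        rw [Matrix.smul_kronecker, Matrix.kronecker_smul, smul_smul, smul_smul]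
        congr 1
        push_cast
        field_simp
        try ring
  refine ⟨n, fun k => c (e k) * (nx (e k) * ny (e k)), fun k => DA (e k), fun k => DB (e k),
    ?_, ?_, fun k => hDAd (e k), fun k => hDBd (e k), ?_⟩
  · intro k
    exact mul_nonneg (hc _) (mul_nonneg (hnxnn _) (hnynn _))
  · -- sum of weights is 1, via trace
    have htr2 : ((∑ k : Fin n, (c (e k) * (nx (e k) * ny (e k)) : ℝ) : ℝ) : ℂ) = 1 := by
      rw [Complex.ofReal_sum]
      simp_rw [Complex.ofReal_mul]
      rw [Equiv.sum_comp e (fun i => ((c i : ℂ) * ((nx i : ℂ) * (ny i : ℂ))))]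
      have h2 := congrArg Matrix.trace hdec
      rw [htr, Matrix.trace_sum] at h2
      simp_rw [Matrix.trace_smul, Matrix.trace_kronecker, trace_rankOne, smul_eq_mul] at h2
      exact h2.symm
    exact_mod_cast htr2
  · rw [hdec]
    rw [← Equiv.sum_comp e (fun i => ((c i : ℝ) : ℂ) • (rankOne (x i) ⊗ₖ rankOne (y i)))]
    apply Finset.sum_congr rfl
    intro k _
    exact key (e k)



lemma ptraceB_sum_rankOne {A B : Type*} [Fintype A] [Fintype B] [DecidableEq B]
    {ι : Type*} [Fintype ι] (V : ι → (A × B) → ℂ) :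
    ∑ i, (ptraceB (rankOne (V i)) ⊗ₖ (1 : Matrix B B ℂ) + rankOne (V i))
      = ptraceB (∑ i, rankOne (V i)) ⊗ₖ (1 : Matrix B B ℂ) + ∑ i, rankOne (V i) := by
  ext ⟨a, c⟩ ⟨a', c'⟩
  simp only [Matrix.sum_apply, Matrix.add_apply, Matrix.kroneckerMap_apply, ptraceB,
    Matrix.of_apply, Finset.sum_add_distrib]
  congr 1
  rw [← Finset.sum_mul]
  congr 1
  rw [Finset.sum_comm]

lemma ptraceB_smul {A B : Type*} [Fintype B] (t : ℂ) (M : Matrix (A × B) (A × B) ℂ) :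
    ptraceB (t • M) = t • ptraceB M := by
  ext a a'
  simp [ptraceB, Finset.mul_sum]

lemma ptraceB_sub {A B : Type*} [Fintype B] (M N : Matrix (A × B) (A × B) ℂ) :
    ptraceB (M - N) = ptraceB M - ptraceB N := by
  ext a a'
  simp [ptraceB, Finset.sum_sub_distrib]

lemma ptraceB_kron_one {A B : Type*} [Fintype B] [DecidableEq B] (X : Matrix A A ℂ) :
    ptraceB (X ⊗ₖ (1 : Matrix B B ℂ)) = (Fintype.card B : ℂ) • X := by
  ext a a'
  simp [ptraceB, Matrix.one_apply, Finset.mul_sum, mul_comm]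


/-- If `(d_B + 1) σ_{AB} ≥ σ_A ⊗ I_B` then `σ_{AB}` is separable. -/
theorem stmt14 {A B : Type*} [Fintype A] [DecidableEq A] [Fintype B] [DecidableEq B]
    (σAB : Matrix (A × B) (A × B) ℂ) (hσ : IsDensity σAB)
    (h : ((Fintype.card B + 1 : ℂ) • σAB -
      ptraceB σAB ⊗ₖ (1 : Matrix B B ℂ)).PosSemidef) :
    IsSep σAB := by
  classical
  obtain ⟨hpsd, htr⟩ := hσ
  have hABne : Nonempty (A × B) := by
    by_contra hne
    rw [not_nonempty_iff] at hne
    have h0 : σAB.trace = 0 := by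
      rw [Matrix.trace]
      simp
    rw [htr] at h0
    exact one_ne_zero h0
  haveI hNA : Nonempty A := hABne.elim (fun p => ⟨p.1⟩)
  haveI hNB : Nonempty B := hABne.elim (fun p => ⟨p.2⟩)
  obtain ⟨V, hV⟩ := psd_sum_rankOne h
  have hcard : ((Fintype.card B : ℂ) + 1) ≠ 0 := by
    exact_mod_cast Nat.cast_add_one_ne_zero (R := ℂ) (Fintype.card B)
  -- ptraceB of the PSD matrix equals ptraceB σAB
  have hptr : ptraceB ((Fintype.card B + 1 : ℂ) • σAB - ptraceB σAB ⊗ₖ (1 : Matrix B B ℂ))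
      = ptraceB σAB := by
    rw [ptraceB_sub, ptraceB_smul, ptraceB_kron_one]
    rw [add_smul, one_smul]
    abel
  -- σAB as a scaled sum
  have hsum : σAB = ((Fintype.card B : ℂ) + 1)⁻¹ •
      (ptraceB σAB ⊗ₖ (1 : Matrix B B ℂ)
        + ((Fintype.card B + 1 : ℂ) • σAB - ptraceB σAB ⊗ₖ (1 : Matrix B B ℂ))) := by
    rw [add_sub_cancel]
    rw [smul_smul, inv_mul_cancel₀ hcard, one_smul]
  -- the big separable decomposition
  apply isSep_of_decomp htr
    (ι := (A × B) × ((B → Fin 4) ⊕ B))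
    (c := fun z => ((Fintype.card B + 1 : ℝ))⁻¹ *
      Sum.elim (fun _ : B → Fin 4 => (((4:ℝ) ^ Fintype.card B))⁻¹) (fun _ : B => 1) z.2)
    (x := fun z => Sum.elim (fun ω => xv (V z.1) (fun b => chi (ω b)))
      (fun j => xv (V z.1) (fun b => if b = j then 1 else 0)) z.2)
    (y := fun z => Sum.elim (fun ω => fun b => (starRingEnd ℂ) (chi (ω b)))
      (fun j => fun b => if b = j then (1:ℂ) else 0) z.2)
  · intro z
    rcases z with ⟨i, s | s⟩ <;> simp only [Sum.elim_inl, Sum.elim_inr] <;> positivity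
  · rw [Fintype.sum_prod_type]
    have inner : ∀ i : A × B,
        (∑ s : (B → Fin 4) ⊕ B, ((((Fintype.card B + 1 : ℝ))⁻¹ *
            Sum.elim (fun _ : B → Fin 4 => (((4:ℝ) ^ Fintype.card B))⁻¹) (fun _ : B => 1) s : ℝ) : ℂ) •
            (rankOne (Sum.elim (fun ω => xv (V i) (fun b => chi (ω b)))
              (fun j => xv (V i) (fun b => if b = j then 1 else 0)) s)
              ⊗ₖ rankOne (Sum.elim (fun ω => fun b => (starRingEnd ℂ) (chi (ω b)))
                (fun j => fun b => if b = j then (1:ℂ) else 0) s)))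
        = ((Fintype.card B : ℂ) + 1)⁻¹ •
            (ptraceB (rankOne (V i)) ⊗ₖ (1 : Matrix B B ℂ) + rankOne (V i)) := by
      intro i
      rw [Fintype.sum_sum_type]
      rw [magic (V i), smul_add, smul_smul, Finset.smul_sum, Finset.smul_sum]
      congr 1
      · -- omega part
        apply Finset.sum_congr rfl
        intro ω _
        simp only [Sum.elim_inl]
        congr 1
        push_cast
        ring
      · -- e_j part
        apply Finset.sum_congr rfl
        intro j _
        simp only [Sum.elim_inr]
        congr 1
        push_cast
        ring
    rw [Finset.sum_congr rfl (fun i _ => inner i)]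
    rw [← Finset.smul_sum, ptraceB_sum_rankOne, ← hV, hptr, ← hsum]
end

section
/- If a two-qubit Bell-diagonal state ρ = Σ p_i |Φ_i⟩⟨Φ_i| has a 2-symmetric extension, then p_i ≤ 3/4 for every i ∈ {1,2,3,4}. -/
open Matrix Kronecker BigOperators
open scoped ComplexOrder

/-- The four Bell states of two qubits. -/
noncomputable def bell : Fin 4 → (Fin 2 × Fin 2 → ℂ) :=
  ![fun p => if p.1 = p.2 then ((Real.sqrt 2 : ℂ))⁻¹ else 0,
    fun p => if p = (0, 0) then ((Real.sqrt 2 : ℂ))⁻¹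
             else if p = (1, 1) then -((Real.sqrt 2 : ℂ))⁻¹ else 0,
    fun p => if p.1 ≠ p.2 then ((Real.sqrt 2 : ℂ))⁻¹ else 0,
    fun p => if p = (0, 1) then ((Real.sqrt 2 : ℂ))⁻¹
             else if p = (1, 0) then -((Real.sqrt 2 : ℂ))⁻¹ else 0]

/-- The Bell-diagonal state `∑ p_i |Φ_i⟩⟨Φ_i|`. -/
noncomputable def bellDiag (p : Fin 4 → ℝ) : Matrix (Fin 2 × Fin 2) (Fin 2 × Fin 2) ℂ :=
  ∑ i, (p i : ℂ) • Matrix.vecMulVec (bell i) (star (bell i))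


section Aux

lemma h2c : (Real.sqrt 2 : ℂ) * (Real.sqrt 2 : ℂ) = 2 := by
  norm_cast; rw [Real.mul_self_sqrt] <;> norm_num

lemma s2p : ((Real.sqrt 2 : ℂ))⁻¹ ^ 2 = (2:ℂ)⁻¹ := by
  rw [sq, ← mul_inv, h2c]

lemma s2inv : ((Real.sqrt 2 : ℂ))⁻¹ * ((Real.sqrt 2 : ℂ))⁻¹ = 2⁻¹ := by
  rw [← mul_inv, h2c]

lemma s2q : ((Real.sqrt 2 : ℂ) ^ 2)⁻¹ = (2:ℂ)⁻¹ := by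
  norm_cast; rw [Real.sq_sqrt] <;> norm_num

lemma sum_pi_fin_two (F : (Fin 2 → Fin 2) → ℂ) :
    ∑ f, F f = F ![0,0] + F ![0,1] + F ![1,0] + F ![1,1] := by
  have h : (Finset.univ : Finset (Fin 2 → Fin 2)) = {![0,0], ![0,1], ![1,0], ![1,1]} := by decide
  rw [h]
  rw [Finset.sum_insert (by decide), Finset.sum_insert (by decide),
    Finset.sum_insert (by decide), Finset.sum_singleton, add_assoc, add_assoc]

@[simp] lemma upd0 (b c d : Fin 2) : Function.update ![b,c] 0 d = ![d,c] := by
  funext i; fin_cases i <;> simp [Function.update]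
@[simp] lemma upd1 (b c d : Fin 2) : Function.update ![b,c] 1 d = ![b,d] := by
  funext i; fin_cases i <;> simp [Function.update]

/-- The Bell projector `|Φ_i⟩⟨Φ_i|`. -/
noncomputable def BP (i : Fin 4) : Matrix (Fin 2 × Fin 2) (Fin 2 × Fin 2) ℂ :=
  Matrix.vecMulVec (bell i) (star (bell i))

/-- Embed a two-qubit matrix as an operator on `A ⊗ B₁ ⊗ B₂` acting on `A, B₁`. -/
noncomputable def emb0 (P : Matrix (Fin 2 × Fin 2) (Fin 2 × Fin 2) ℂ) :
    Matrix (Fin 2 × (Fin 2 → Fin 2)) (Fin 2 × (Fin 2 → Fin 2)) ℂ :=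
  Matrix.of fun x y => if x.2 1 = y.2 1 then P (x.1, x.2 0) (y.1, y.2 0) else 0

/-- Embed a two-qubit matrix as an operator on `A ⊗ B₁ ⊗ B₂` acting on `A, B₂`. -/
noncomputable def emb1 (P : Matrix (Fin 2 × Fin 2) (Fin 2 × Fin 2) ℂ) :
    Matrix (Fin 2 × (Fin 2 → Fin 2)) (Fin 2 × (Fin 2 → Fin 2)) ℂ :=
  Matrix.of fun x y => if x.2 0 = y.2 0 then P (x.1, x.2 1) (y.1, y.2 1) else 0

lemma trace_emb0 (P : Matrix (Fin 2 × Fin 2) (Fin 2 × Fin 2) ℂ)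
    (ρ : Matrix (Fin 2 × (Fin 2 → Fin 2)) (Fin 2 × (Fin 2 → Fin 2)) ℂ) :
    (emb0 P * ρ).trace = (P * margAB 0 ρ).trace := by
  simp only [Matrix.trace, Matrix.mul_apply, Matrix.diag_apply, margAB, emb0, Matrix.of_apply,
    Fintype.sum_prod_type, Fin.sum_univ_two, sum_pi_fin_two]
  norm_num [Fin.sum_univ_two]
  ring

lemma trace_emb1 (P : Matrix (Fin 2 × Fin 2) (Fin 2 × Fin 2) ℂ)
    (ρ : Matrix (Fin 2 × (Fin 2 → Fin 2)) (Fin 2 × (Fin 2 → Fin 2)) ℂ) :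
    (emb1 P * ρ).trace = (P * margAB 1 ρ).trace := by
  simp only [Matrix.trace, Matrix.mul_apply, Matrix.diag_apply, margAB, emb1, Matrix.of_apply,
    Fintype.sum_prod_type, Fin.sum_univ_two, sum_pi_fin_two]
  norm_num [Fin.sum_univ_two]
  ring

lemma trace_vmv_mul {n : Type*} [Fintype n] (a b c d : n → ℂ) :
    (Matrix.vecMulVec a b * Matrix.vecMulVec c d).trace = (b ⬝ᵥ c) * (d ⬝ᵥ a) := by
  simp only [Matrix.trace, Matrix.diag_apply, Matrix.mul_apply, Matrix.vecMulVec_apply,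
    dotProduct, Finset.sum_mul_sum]
  rw [Finset.sum_comm]
  exact Finset.sum_congr rfl fun i _ => Finset.sum_congr rfl fun j _ => by ring

lemma bell_ortho (i j : Fin 4) : (star (bell i)) ⬝ᵥ (bell j) = if i = j then 1 else 0 := by
  fin_cases i <;> fin_cases j <;>
    simp [bell, dotProduct, Fintype.sum_prod_type, Fin.sum_univ_two, Prod.ext_iff, s2inv] <;>
    norm_num

lemma trace_bellP (p : Fin 4 → ℝ) (i : Fin 4) :
    (BP i * bellDiag p).trace = (p i : ℂ) := by
  simp only [BP, bellDiag, Finset.mul_sum, Matrix.mul_smul, Matrix.trace_sum, Matrix.trace_smul,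
    trace_vmv_mul, bell_ortho]
  rw [Fin.sum_univ_four]
  fin_cases i <;> simp

lemma psd_vmv {n : Type*} [Fintype n] (w : n → ℂ) :
    (Matrix.vecMulVec w (star w)).PosSemidef := by
  refine Matrix.PosSemidef.of_dotProduct_mulVec_nonneg ?_ ?_
  · ext i j
    simp [Matrix.conjTranspose_apply, Matrix.vecMulVec_apply, mul_comm]
  · intro x
    have h1 : Matrix.vecMulVec w (star w) *ᵥ x = ((star w) ⬝ᵥ x) • w := by
      ext i
      simp only [Matrix.mulVec, dotProduct, Matrix.vecMulVec_apply, Pi.smul_apply,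
        smul_eq_mul, Finset.sum_mul]
      exact Finset.sum_congr rfl fun j _ => by ring
    have h2 : dotProduct (star x) w = star ((star w) ⬝ᵥ x) := by
      simp [dotProduct, star_sum, mul_comm]
    rw [h1, dotProduct_smul, smul_eq_mul, h2, mul_comm]
    exact star_mul_self_nonneg _

lemma psd_smul {n : Type*} [Fintype n] {M : Matrix n n ℂ} (hM : M.PosSemidef)
    {c : ℝ} (hc : 0 ≤ c) : ((c : ℂ) • M).PosSemidef := by
  refine Matrix.PosSemidef.of_dotProduct_mulVec_nonneg ?_ ?_
  · ext i j
    simp [Matrix.conjTranspose_apply, hM.1.apply, Complex.conj_ofReal]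
  · intro x
    have := hM.dotProduct_mulVec_nonneg x
    rw [Matrix.smul_mulVec, dotProduct_smul, smul_eq_mul]
    exact mul_nonneg (by exact_mod_cast Complex.zero_le_real.mpr hc) this

lemma psd_trace_nonneg {n : Type*} [Fintype n] [DecidableEq n] {M : Matrix n n ℂ}
    (hM : M.PosSemidef) : 0 ≤ M.trace := by
  refine Finset.sum_nonneg fun i _ => ?_
  have := hM.dotProduct_mulVec_nonneg (Pi.single i 1)
  simpa [Matrix.mulVec_single, dotProduct, Pi.single_apply, Finset.sum_ite_eq] using this

open scoped MatrixOrder in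
lemma psd_trace_mul_nonneg {n : Type*} [Fintype n] [DecidableEq n]
    {A B : Matrix n n ℂ} (hA : A.PosSemidef) (hB : B.PosSemidef) : 0 ≤ (A * B).trace := by
  have hB0 : 0 ≤ B := Matrix.nonneg_iff_posSemidef.mpr hB
  have hs : CFC.sqrt B * CFC.sqrt B = B := CFC.sqrt_mul_sqrt_self B hB0
  have hS : (CFC.sqrt B).PosSemidef := Matrix.nonneg_iff_posSemidef.mp (CFC.sqrt_nonneg B)
  have key : (A * B).trace = ((CFC.sqrt B)ᴴ * A * CFC.sqrt B).trace := by
    conv_lhs => rw [← hs]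
    rw [← Matrix.mul_assoc, Matrix.trace_mul_comm, hS.1, Matrix.mul_assoc]
  rw [key]
  exact psd_trace_nonneg (hA.conjTranspose_mul_mul_same _)

noncomputable def w00 : Fin 2 × (Fin 2 → Fin 2) → ℂ := fun x => ![![![(1 : ℂ), (0 : ℂ)], ![(0 : ℂ), (0 : ℂ)]], ![![(0 : ℂ), ((-1 : ℂ))], ![((-1 : ℂ)), (0 : ℂ)]]] x.1 (x.2 0) (x.2 1)

noncomputable def w01 : Fin 2 × (Fin 2 → Fin 2) → ℂ := fun x => ![![![(0 : ℂ), (1 : ℂ)], ![(0 : ℂ), (0 : ℂ)]], ![![(0 : ℂ), (0 : ℂ)], ![(0 : ℂ), ((-1/2 : ℂ))]]] x.1 (x.2 0) (x.2 1)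

noncomputable def w02 : Fin 2 × (Fin 2 → Fin 2) → ℂ := fun x => ![![![(0 : ℂ), (0 : ℂ)], ![(1 : ℂ), (0 : ℂ)]], ![![(0 : ℂ), (0 : ℂ)], ![(0 : ℂ), ((-1/2 : ℂ))]]] x.1 (x.2 0) (x.2 1)

noncomputable def w03 : Fin 2 × (Fin 2 → Fin 2) → ℂ := fun x => ![![![(0 : ℂ), (0 : ℂ)], ![(0 : ℂ), (1 : ℂ)]], ![![(0 : ℂ), (0 : ℂ)], ![(0 : ℂ), (0 : ℂ)]]] x.1 (x.2 0) (x.2 1)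

noncomputable def w04 : Fin 2 × (Fin 2 → Fin 2) → ℂ := fun x => ![![![(0 : ℂ), (0 : ℂ)], ![(0 : ℂ), (0 : ℂ)]], ![![(1 : ℂ), (0 : ℂ)], ![(0 : ℂ), (0 : ℂ)]]] x.1 (x.2 0) (x.2 1)

noncomputable def w05 : Fin 2 × (Fin 2 → Fin 2) → ℂ := fun x => ![![![(0 : ℂ), (0 : ℂ)], ![(0 : ℂ), (0 : ℂ)]], ![![(0 : ℂ), (1 : ℂ)], ![((-1 : ℂ)), (0 : ℂ)]]] x.1 (x.2 0) (x.2 1)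

set_option maxHeartbeats 4000000 in
lemma decomp0 : (3/2 : ℂ) • (1 : Matrix (Fin 2 × (Fin 2 → Fin 2)) (Fin 2 × (Fin 2 → Fin 2)) ℂ) - emb0 (BP 0) - emb1 (BP 0) = (((1/2 : ℝ)) : ℂ) • Matrix.vecMulVec w00 (star w00) + (((1/1 : ℝ)) : ℂ) • Matrix.vecMulVec w01 (star w01) + (((1/1 : ℝ)) : ℂ) • Matrix.vecMulVec w02 (star w02) + (((3/2 : ℝ)) : ℂ) • Matrix.vecMulVec w03 (star w03) + (((3/2 : ℝ)) : ℂ) • Matrix.vecMulVec w04 (star w04) + (((1/2 : ℝ)) : ℂ) • Matrix.vecMulVec w05 (star w05) := by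
  ext ⟨a, f⟩ ⟨a', g⟩
  obtain ⟨b, c, rfl⟩ : ∃ b c, f = ![b, c] := ⟨f 0, f 1, by funext i; fin_cases i <;> rfl⟩
  obtain ⟨b', c', rfl⟩ : ∃ b c, g = ![b, c] := ⟨g 0, g 1, by funext i; fin_cases i <;> rfl⟩
  fin_cases a <;> fin_cases a' <;> fin_cases b <;> fin_cases b' <;> fin_cases c <;> fin_cases c' <;>
    simp [funext_iff, Fin.forall_fin_two, emb0, emb1, BP, bell, w00, w01, w02, w03, w04, w05, Matrix.vecMulVec_apply, Matrix.one_apply, Pi.star_apply, RCLike.star_def, map_inv₀, map_neg, Complex.conj_ofReal, Prod.ext_iff] <;>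
    ring_nf <;>
    norm_num [s2p, s2q]


noncomputable def w10 : Fin 2 × (Fin 2 → Fin 2) → ℂ := fun x => ![![![(1 : ℂ), (0 : ℂ)], ![(0 : ℂ), (0 : ℂ)]], ![![(0 : ℂ), (1 : ℂ)], ![(1 : ℂ), (0 : ℂ)]]] x.1 (x.2 0) (x.2 1)

noncomputable def w11 : Fin 2 × (Fin 2 → Fin 2) → ℂ := fun x => ![![![(0 : ℂ), (1 : ℂ)], ![(0 : ℂ), (0 : ℂ)]], ![![(0 : ℂ), (0 : ℂ)], ![(0 : ℂ), ((1/2 : ℂ))]]] x.1 (x.2 0) (x.2 1)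

noncomputable def w12 : Fin 2 × (Fin 2 → Fin 2) → ℂ := fun x => ![![![(0 : ℂ), (0 : ℂ)], ![(1 : ℂ), (0 : ℂ)]], ![![(0 : ℂ), (0 : ℂ)], ![(0 : ℂ), ((1/2 : ℂ))]]] x.1 (x.2 0) (x.2 1)

noncomputable def w13 : Fin 2 × (Fin 2 → Fin 2) → ℂ := fun x => ![![![(0 : ℂ), (0 : ℂ)], ![(0 : ℂ), (1 : ℂ)]], ![![(0 : ℂ), (0 : ℂ)], ![(0 : ℂ), (0 : ℂ)]]] x.1 (x.2 0) (x.2 1)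

noncomputable def w14 : Fin 2 × (Fin 2 → Fin 2) → ℂ := fun x => ![![![(0 : ℂ), (0 : ℂ)], ![(0 : ℂ), (0 : ℂ)]], ![![(1 : ℂ), (0 : ℂ)], ![(0 : ℂ), (0 : ℂ)]]] x.1 (x.2 0) (x.2 1)

noncomputable def w15 : Fin 2 × (Fin 2 → Fin 2) → ℂ := fun x => ![![![(0 : ℂ), (0 : ℂ)], ![(0 : ℂ), (0 : ℂ)]], ![![(0 : ℂ), (1 : ℂ)], ![((-1 : ℂ)), (0 : ℂ)]]] x.1 (x.2 0) (x.2 1)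

set_option maxHeartbeats 4000000 in
lemma decomp1 : (3/2 : ℂ) • (1 : Matrix (Fin 2 × (Fin 2 → Fin 2)) (Fin 2 × (Fin 2 → Fin 2)) ℂ) - emb0 (BP 1) - emb1 (BP 1) = (((1/2 : ℝ)) : ℂ) • Matrix.vecMulVec w10 (star w10) + (((1/1 : ℝ)) : ℂ) • Matrix.vecMulVec w11 (star w11) + (((1/1 : ℝ)) : ℂ) • Matrix.vecMulVec w12 (star w12) + (((3/2 : ℝ)) : ℂ) • Matrix.vecMulVec w13 (star w13) + (((3/2 : ℝ)) : ℂ) • Matrix.vecMulVec w14 (star w14) + (((1/2 : ℝ)) : ℂ) • Matrix.vecMulVec w15 (star w15) := by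
  ext ⟨a, f⟩ ⟨a', g⟩
  obtain ⟨b, c, rfl⟩ : ∃ b c, f = ![b, c] := ⟨f 0, f 1, by funext i; fin_cases i <;> rfl⟩
  obtain ⟨b', c', rfl⟩ : ∃ b c, g = ![b, c] := ⟨g 0, g 1, by funext i; fin_cases i <;> rfl⟩
  fin_cases a <;> fin_cases a' <;> fin_cases b <;> fin_cases b' <;> fin_cases c <;> fin_cases c' <;>
    simp [funext_iff, Fin.forall_fin_two, emb0, emb1, BP, bell, w10, w11, w12, w13, w14, w15, Matrix.vecMulVec_apply, Matrix.one_apply, Pi.star_apply, RCLike.star_def, map_inv₀, map_neg, Complex.conj_ofReal, Prod.ext_iff] <;>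
    ring_nf <;>
    norm_num [s2p, s2q]


noncomputable def w20 : Fin 2 × (Fin 2 → Fin 2) → ℂ := fun x => ![![![(1 : ℂ), (0 : ℂ)], ![(0 : ℂ), (0 : ℂ)]], ![![(0 : ℂ), (0 : ℂ)], ![(0 : ℂ), (0 : ℂ)]]] x.1 (x.2 0) (x.2 1)

noncomputable def w21 : Fin 2 × (Fin 2 → Fin 2) → ℂ := fun x => ![![![(0 : ℂ), (1 : ℂ)], ![(0 : ℂ), (0 : ℂ)]], ![![((-1/2 : ℂ)), (0 : ℂ)], ![(0 : ℂ), (0 : ℂ)]]] x.1 (x.2 0) (x.2 1)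

noncomputable def w22 : Fin 2 × (Fin 2 → Fin 2) → ℂ := fun x => ![![![(0 : ℂ), (0 : ℂ)], ![(1 : ℂ), (0 : ℂ)]], ![![((-1/2 : ℂ)), (0 : ℂ)], ![(0 : ℂ), (0 : ℂ)]]] x.1 (x.2 0) (x.2 1)

noncomputable def w23 : Fin 2 × (Fin 2 → Fin 2) → ℂ := fun x => ![![![(0 : ℂ), (0 : ℂ)], ![(0 : ℂ), (1 : ℂ)]], ![![(0 : ℂ), ((-1 : ℂ))], ![((-1 : ℂ)), (0 : ℂ)]]] x.1 (x.2 0) (x.2 1)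

noncomputable def w24 : Fin 2 × (Fin 2 → Fin 2) → ℂ := fun x => ![![![(0 : ℂ), (0 : ℂ)], ![(0 : ℂ), (0 : ℂ)]], ![![(0 : ℂ), (1 : ℂ)], ![((-1 : ℂ)), (0 : ℂ)]]] x.1 (x.2 0) (x.2 1)

noncomputable def w25 : Fin 2 × (Fin 2 → Fin 2) → ℂ := fun x => ![![![(0 : ℂ), (0 : ℂ)], ![(0 : ℂ), (0 : ℂ)]], ![![(0 : ℂ), (0 : ℂ)], ![(0 : ℂ), (1 : ℂ)]]] x.1 (x.2 0) (x.2 1)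

set_option maxHeartbeats 4000000 in
lemma decomp2 : (3/2 : ℂ) • (1 : Matrix (Fin 2 × (Fin 2 → Fin 2)) (Fin 2 × (Fin 2 → Fin 2)) ℂ) - emb0 (BP 2) - emb1 (BP 2) = (((3/2 : ℝ)) : ℂ) • Matrix.vecMulVec w20 (star w20) + (((1/1 : ℝ)) : ℂ) • Matrix.vecMulVec w21 (star w21) + (((1/1 : ℝ)) : ℂ) • Matrix.vecMulVec w22 (star w22) + (((1/2 : ℝ)) : ℂ) • Matrix.vecMulVec w23 (star w23) + (((1/2 : ℝ)) : ℂ) • Matrix.vecMulVec w24 (star w24) + (((3/2 : ℝ)) : ℂ) • Matrix.vecMulVec w25 (star w25) := by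
  ext ⟨a, f⟩ ⟨a', g⟩
  obtain ⟨b, c, rfl⟩ : ∃ b c, f = ![b, c] := ⟨f 0, f 1, by funext i; fin_cases i <;> rfl⟩
  obtain ⟨b', c', rfl⟩ : ∃ b c, g = ![b, c] := ⟨g 0, g 1, by funext i; fin_cases i <;> rfl⟩
  fin_cases a <;> fin_cases a' <;> fin_cases b <;> fin_cases b' <;> fin_cases c <;> fin_cases c' <;>
    simp [funext_iff, Fin.forall_fin_two, emb0, emb1, BP, bell, w20, w21, w22, w23, w24, w25, Matrix.vecMulVec_apply, Matrix.one_apply, Pi.star_apply, RCLike.star_def, map_inv₀, map_neg, Complex.conj_ofReal, Prod.ext_iff] <;>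
    ring_nf <;>
    norm_num [s2p, s2q]


noncomputable def w30 : Fin 2 × (Fin 2 → Fin 2) → ℂ := fun x => ![![![(1 : ℂ), (0 : ℂ)], ![(0 : ℂ), (0 : ℂ)]], ![![(0 : ℂ), (0 : ℂ)], ![(0 : ℂ), (0 : ℂ)]]] x.1 (x.2 0) (x.2 1)

noncomputable def w31 : Fin 2 × (Fin 2 → Fin 2) → ℂ := fun x => ![![![(0 : ℂ), (1 : ℂ)], ![(0 : ℂ), (0 : ℂ)]], ![![((1/2 : ℂ)), (0 : ℂ)], ![(0 : ℂ), (0 : ℂ)]]] x.1 (x.2 0) (x.2 1)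

noncomputable def w32 : Fin 2 × (Fin 2 → Fin 2) → ℂ := fun x => ![![![(0 : ℂ), (0 : ℂ)], ![(1 : ℂ), (0 : ℂ)]], ![![((1/2 : ℂ)), (0 : ℂ)], ![(0 : ℂ), (0 : ℂ)]]] x.1 (x.2 0) (x.2 1)

noncomputable def w33 : Fin 2 × (Fin 2 → Fin 2) → ℂ := fun x => ![![![(0 : ℂ), (0 : ℂ)], ![(0 : ℂ), (1 : ℂ)]], ![![(0 : ℂ), (1 : ℂ)], ![(1 : ℂ), (0 : ℂ)]]] x.1 (x.2 0) (x.2 1)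

noncomputable def w34 : Fin 2 × (Fin 2 → Fin 2) → ℂ := fun x => ![![![(0 : ℂ), (0 : ℂ)], ![(0 : ℂ), (0 : ℂ)]], ![![(0 : ℂ), (1 : ℂ)], ![((-1 : ℂ)), (0 : ℂ)]]] x.1 (x.2 0) (x.2 1)

noncomputable def w35 : Fin 2 × (Fin 2 → Fin 2) → ℂ := fun x => ![![![(0 : ℂ), (0 : ℂ)], ![(0 : ℂ), (0 : ℂ)]], ![![(0 : ℂ), (0 : ℂ)], ![(0 : ℂ), (1 : ℂ)]]] x.1 (x.2 0) (x.2 1)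

set_option maxHeartbeats 4000000 in
lemma decomp3 : (3/2 : ℂ) • (1 : Matrix (Fin 2 × (Fin 2 → Fin 2)) (Fin 2 × (Fin 2 → Fin 2)) ℂ) - emb0 (BP 3) - emb1 (BP 3) = (((3/2 : ℝ)) : ℂ) • Matrix.vecMulVec w30 (star w30) + (((1/1 : ℝ)) : ℂ) • Matrix.vecMulVec w31 (star w31) + (((1/1 : ℝ)) : ℂ) • Matrix.vecMulVec w32 (star w32) + (((1/2 : ℝ)) : ℂ) • Matrix.vecMulVec w33 (star w33) + (((1/2 : ℝ)) : ℂ) • Matrix.vecMulVec w34 (star w34) + (((3/2 : ℝ)) : ℂ) • Matrix.vecMulVec w35 (star w35) := by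
  ext ⟨a, f⟩ ⟨a', g⟩
  obtain ⟨b, c, rfl⟩ : ∃ b c, f = ![b, c] := ⟨f 0, f 1, by funext i; fin_cases i <;> rfl⟩
  obtain ⟨b', c', rfl⟩ : ∃ b c, g = ![b, c] := ⟨g 0, g 1, by funext i; fin_cases i <;> rfl⟩
  fin_cases a <;> fin_cases a' <;> fin_cases b <;> fin_cases b' <;> fin_cases c <;> fin_cases c' <;>
    simp [funext_iff, Fin.forall_fin_two, emb0, emb1, BP, bell, w30, w31, w32, w33, w34, w35, Matrix.vecMulVec_apply, Matrix.one_apply, Pi.star_apply, RCLike.star_def, map_inv₀, map_neg, Complex.conj_ofReal, Prod.ext_iff] <;>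
    ring_nf <;>
    norm_num [s2p, s2q]



lemma psd_big (i : Fin 4) :
    ((3/2 : ℂ) • (1 : Matrix (Fin 2 × (Fin 2 → Fin 2)) (Fin 2 × (Fin 2 → Fin 2)) ℂ)
      - emb0 (BP i) - emb1 (BP i)).PosSemidef := by
  fin_cases i
  · show ((3/2 : ℂ) • (1 : Matrix (Fin 2 × (Fin 2 → Fin 2)) (Fin 2 × (Fin 2 → Fin 2)) ℂ)
        - emb0 (BP 0) - emb1 (BP 0)).PosSemidef
    rw [decomp0]
    repeat' apply Matrix.PosSemidef.add
    all_goals exact psd_smul (psd_vmv _) (by norm_num)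
  · show ((3/2 : ℂ) • (1 : Matrix (Fin 2 × (Fin 2 → Fin 2)) (Fin 2 × (Fin 2 → Fin 2)) ℂ)
        - emb0 (BP 1) - emb1 (BP 1)).PosSemidef
    rw [decomp1]
    repeat' apply Matrix.PosSemidef.add
    all_goals exact psd_smul (psd_vmv _) (by norm_num)
  · show ((3/2 : ℂ) • (1 : Matrix (Fin 2 × (Fin 2 → Fin 2)) (Fin 2 × (Fin 2 → Fin 2)) ℂ)
        - emb0 (BP 2) - emb1 (BP 2)).PosSemidef
    rw [decomp2]
    repeat' apply Matrix.PosSemidef.add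
    all_goals exact psd_smul (psd_vmv _) (by norm_num)
  · show ((3/2 : ℂ) • (1 : Matrix (Fin 2 × (Fin 2 → Fin 2)) (Fin 2 × (Fin 2 → Fin 2)) ℂ)
        - emb0 (BP 3) - emb1 (BP 3)).PosSemidef
    rw [decomp3]
    repeat' apply Matrix.PosSemidef.add
    all_goals exact psd_smul (psd_vmv _) (by norm_num)

end Aux

/-- If a two-qubit Bell-diagonal state has a 2-symmetric extension then `p_i ≤ 3/4` for
every `i`. -/
theorem stmt19 (p : Fin 4 → ℝ) (h0 : ∀ i, 0 ≤ p i) (h1 : ∑ i, p i = 1)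
    (h : HasSymExt 2 (bellDiag p)) : ∀ i, p i ≤ 3 / 4 := by
  intro i
  obtain ⟨ρ, ⟨hpsd, htr⟩, hm⟩ := h
  have hnn := psd_trace_mul_nonneg (psd_big i) hpsd
  have e0 : (emb0 (BP i) * ρ).trace = (p i : ℂ) := by
    rw [trace_emb0, hm 0, trace_bellP]
  have e1 : (emb1 (BP i) * ρ).trace = (p i : ℂ) := by
    rw [trace_emb1, hm 1, trace_bellP]
  have expand : (((3/2 : ℂ) • (1 : Matrix (Fin 2 × (Fin 2 → Fin 2)) (Fin 2 × (Fin 2 → Fin 2)) ℂ)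
      - emb0 (BP i) - emb1 (BP i)) * ρ).trace = (3/2 : ℂ) - (p i : ℂ) - (p i : ℂ) := by
    rw [Matrix.sub_mul, Matrix.sub_mul, Matrix.smul_mul, Matrix.one_mul,
      Matrix.trace_sub, Matrix.trace_sub, Matrix.trace_smul, htr, e0, e1]
    simp
  rw [expand] at hnn
  have hre : (0:ℂ) ≤ ((3/2 - 2 * p i : ℝ) : ℂ) := by
    convert hnn using 1
    push_cast
    ring
  rw [Complex.zero_le_real] at hre
  linarith
end
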